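/- The equality function EQUAL on {0,1}ⁿ (n even), defined by EQUAL(x) = 1 if the first half of x equals the second half and 0 otherwise, cannot be written as a sum of fewer than 2^{n/2} functions each of which is a product of univariate functions of the coordinates. -/

import Mathlib

open Matrix Module in
lemma rank_add_le' {n : Type*} [Fintype n] [DecidableEq n]
    (A B : Matrix n n ℝ) : (A + B).rank ≤ A.rank + B.rank := by
  rw [Matrix.rank, Matrix.rank, Matrix.rank, mulVecLin_add]
  refine le_trans (Submodule.finrank_mono ?_)
    (Submodule.finrank_add_le_finrank_add_finrank _ _)
  rintro x ⟨y, rfl⟩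
  exact Submodule.add_mem_sup ⟨y, rfl⟩ ⟨y, rfl⟩

open Matrix Module in
lemma rank_sum_le' {n ι : Type*} [Fintype n] [DecidableEq n] (s : Finset ι)
    (f : ι → Matrix n n ℝ) : (∑ j ∈ s, f j).rank ≤ ∑ j ∈ s, (f j).rank := by
  classical
  induction s using Finset.induction with
  | empty => simp
  | insert _ _ hx ih =>
    rw [Finset.sum_insert hx, Finset.sum_insert hx]
    exact le_trans (rank_add_le' _ _) (by omega)

open Matrix in
lemma rank_vecMulVec_le' {n : Type*} [Fintype n] [DecidableEq n]
    (w v : n → ℝ) : (vecMulVec w v).rank ≤ 1 := by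
  rw [vecMulVec_eq Unit w v]
  refine le_trans (rank_mul_le_left _ _) (le_trans (rank_le_card_width _) ?_)
  simp

/-- The EQUAL function on `{0,1}^(2m)` (coordinates indexed by `Fin m ⊕ Fin m`, the two
summands being the two halves) cannot be written as a sum of fewer than `2^m` functions each
of which is a product of univariate functions of the coordinates. -/
theorem stmt_5 {m k : ℕ} (h : Fin k → (Fin m ⊕ Fin m) → Bool → ℝ)
    (hsum : ∀ x : Fin m ⊕ Fin m → Bool,
      (if (∀ i : Fin m, x (Sum.inl i) = x (Sum.inr i)) then (1 : ℝ) else 0) =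
        ∑ j : Fin k, ∏ i, h j i (x i)) :
    2 ^ m ≤ k := by
  classical
  set n := Fin m → Bool
  have key : (1 : Matrix n n ℝ) =
      ∑ j : Fin k, Matrix.vecMulVec (fun a : n => ∏ i, h j (Sum.inl i) (a i))
        (fun b : n => ∏ i, h j (Sum.inr i) (b i)) := by
    ext a b
    have := hsum (Sum.elim a b)
    simp only [Sum.elim_inl, Sum.elim_inr, Fintype.prod_sum_type] at this
    rw [Matrix.sum_apply]
    simp only [Matrix.vecMulVec_apply]
    rw [← this, Matrix.one_apply]
    congr 1
    exact propext funext_iff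
  have h1 : (1 : Matrix n n ℝ).rank = 2 ^ m := by
    rw [Matrix.rank_one]
    simp [n]
  calc 2 ^ m = (1 : Matrix n n ℝ).rank := h1.symm
    _ ≤ ∑ _j : Fin k, 1 := by
        rw [key]
        exact le_trans (rank_sum_le' _ _)
          (Finset.sum_le_sum fun j _ => rank_vecMulVec_le' _ _)
    _ = k := by simp
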